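/- Let 𝕄₁ = ((G₁, M₁, I₁, R_□₁, R_◇₁), V₁) and 𝕄₂ = ((G₂, M₂, I₂, R_□₂, R_◇₂), V₂) be polarity-based models for the non-distributive modal μ-calculus. If g₁ ∈ G₁ and g₂ ∈ G₂ are bisimilar (there exist a simulation (S₁, T₁) from 𝕄₁ to 𝕄₂ and a simulation (S₂, T₂) from 𝕄₂ to 𝕄₁ with g₁ S₁ g₂ and g₂ S₂ g₁), then for every formula φ of the non-distributive modal μ-calculus all of whose variables are bound, 𝕄₁, g₁ ⊩ φ if and only if 𝕄₂, g₂ ⊩ φ. Likewise, if m₁ ∈ M₁ and m₂ ∈ M₂ are bisimilar (there exist such simulations with m₁ T₁ m₂ and m₂ T₂ m₁), then 𝕄₁, m₁ ≻ φ if and only if 𝕄₂, m₂ ≻ φ for every such formula φ. -/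

import Mathlib

/-- Formulas of the non-distributive modal μ-calculus, with atoms in `P` and
(fixed-point) variables in `Var`. -/
inductive MuForm (P Var : Type*) : Type _
  | atom : P → MuForm P Var
  | var : Var → MuForm P Var
  | bot : MuForm P Var
  | top : MuForm P Var
  | or : MuForm P Var → MuForm P Var → MuForm P Var
  | and : MuForm P Var → MuForm P Var → MuForm P Var
  | box : MuForm P Var → MuForm P Var
  | dia : MuForm P Var → MuForm P Var
  | mu : Var → MuForm P Var → MuForm P Var
  | nu : Var → MuForm P Var → MuForm P Var

variable {P Var G M : Type*}

/-- Galois-stability of `R_□^{(0)}[Y]` for arbitrary `Y ⊆ M`, from `I`-compatibility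
of `R_□` on singletons. -/
theorem stable_extentClosure_box (I : G → M → Prop) (R : G → M → Prop)
    (h : ∀ m : M,
      lowerPolar I (upperPolar I (lowerPolar R {m})) = lowerPolar R {m})
    (Y : Set M) :
    lowerPolar I (upperPolar I (lowerPolar R Y)) = lowerPolar R Y := by
  apply subset_antisymm
  · intro g hg m hm
    have h1 : lowerPolar R Y ⊆ lowerPolar R ({m} : Set M) := by
      intro g' hg' m' hm'
      rcases hm' with rfl
      exact hg' hm
    have h2 := lowerPolar_anti I (upperPolar_anti I h1)
    rw [h m] at h2
    exact h2 hg rfl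
  · exact subset_lowerPolar_upperPolar I _

/-- Galois-stability of `R_◇^{(0)}[B]` for arbitrary `B ⊆ G`, from `I`-compatibility
of `R_◇` on singletons. -/
theorem stable_extentClosure_dia (I : G → M → Prop) (R : M → G → Prop)
    (h : ∀ g : G,
      upperPolar I (lowerPolar I (lowerPolar R {g})) = lowerPolar R {g})
    (B : Set G) :
    upperPolar I (lowerPolar I (lowerPolar R B)) = lowerPolar R B := by
  apply subset_antisymm
  · intro m hm g hg
    have h1 : lowerPolar R B ⊆ lowerPolar R ({g} : Set G) := by
      intro m' hm' g' hg'
      rcases hg' with rfl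
      exact hm' hg
    have h2 := upperPolar_anti I (lowerPolar_anti I h1)
    rw [h g] at h2
    exact h2 hm rfl
  · exact subset_upperPolar_lowerPolar I _

/-- The box operation `[R_□]c = (R_□^{(0)}[⦃c⦄], (R_□^{(0)}[⦃c⦄])^↑)` on the concept
lattice of an enriched formal context. -/
def boxConcept (I : G → M → Prop) (R : G → M → Prop)
    (h : ∀ m : M,
      lowerPolar I (upperPolar I (lowerPolar R {m})) = lowerPolar R {m})
    (c : Concept G M I) : Concept G M I where
  extent := lowerPolar R c.intent
  intent := upperPolar I (lowerPolar R c.intent)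
  upperPolar_extent := rfl
  lowerPolar_intent := stable_extentClosure_box I R h c.intent

/-- The diamond operation `⟨R_◇⟩c = ((R_◇^{(0)}[⟦c⟧])^↓, R_◇^{(0)}[⟦c⟧])` on the concept
lattice of an enriched formal context. -/
def diaConcept (I : G → M → Prop) (R : M → G → Prop)
    (h : ∀ g : G,
      upperPolar I (lowerPolar I (lowerPolar R {g})) = lowerPolar R {g})
    (c : Concept G M I) : Concept G M I where
  extent := lowerPolar I (lowerPolar R c.extent)
  intent := lowerPolar R c.extent
  upperPolar_extent := stable_extentClosure_dia I R h c.extent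
  lowerPolar_intent := rfl

/-- The interpretation of a μ-calculus formula as a formal concept, given a valuation `V`
of the atoms and an assignment `A` of the variables. Fixed points are given by their
Knaster–Tarski descriptions `μz.φ = ⋀{c : ⟦φ⟧_{A[z↦c]} ≤ c}` and
`νz.φ = ⋁{c : c ≤ ⟦φ⟧_{A[z↦c]}}`. -/
def MuForm.sem [DecidableEq Var] (I : G → M → Prop) (Rbox : G → M → Prop)
    (Rdia : M → G → Prop)
    (hbox : ∀ m : M,
      lowerPolar I (upperPolar I (lowerPolar Rbox {m})) = lowerPolar Rbox {m})
    (hdia : ∀ g : G,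
      upperPolar I (lowerPolar I (lowerPolar Rdia {g})) = lowerPolar Rdia {g})
    (V : P → Concept G M I) :
    MuForm P Var → (Var → Concept G M I) → Concept G M I
  | atom p, _ => V p
  | var v, A => A v
  | bot, _ => ⊥
  | top, _ => ⊤
  | MuForm.or φ ψ, A => sem I Rbox Rdia hbox hdia V φ A ⊔ sem I Rbox Rdia hbox hdia V ψ A
  | MuForm.and φ ψ, A => sem I Rbox Rdia hbox hdia V φ A ⊓ sem I Rbox Rdia hbox hdia V ψ A
  | box φ, A => boxConcept I Rbox hbox (sem I Rbox Rdia hbox hdia V φ A)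
  | dia φ, A => diaConcept I Rdia hdia (sem I Rbox Rdia hbox hdia V φ A)
  | mu v φ, A =>
      sInf {c | sem I Rbox Rdia hbox hdia V φ (Function.update A v c) ≤ c}
  | nu v φ, A =>
      sSup {c | c ≤ sem I Rbox Rdia hbox hdia V φ (Function.update A v c)}

/-- The set of free variables of a μ-calculus formula. -/
def MuForm.freeVars : MuForm P Var → Set Var
  | atom _ => ∅
  | var v => {v}
  | bot => ∅
  | top => ∅
  | MuForm.or φ ψ => freeVars φ ∪ freeVars ψ
  | MuForm.and φ ψ => freeVars φ ∪ freeVars ψ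
  | box φ => freeVars φ
  | dia φ => freeVars φ
  | mu v φ => freeVars φ \ {v}
  | nu v φ => freeVars φ \ {v}

/-- A simulation from the polarity-based model `((G₁,M₁,I₁,Rb₁,Rd₁),V₁)` to the
polarity-based model `((G₂,M₂,I₂,Rb₂,Rd₂),V₂)`: a pair of relations `(S, T)` satisfying
conditions (1)–(6) of Definition 5.1. -/
def IsSimulation {P G₁ M₁ G₂ M₂ : Type*}
    (I₁ : G₁ → M₁ → Prop) (Rb₁ : G₁ → M₁ → Prop) (Rd₁ : M₁ → G₁ → Prop)
    (V₁ : P → Concept G₁ M₁ I₁)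
    (I₂ : G₂ → M₂ → Prop) (Rb₂ : G₂ → M₂ → Prop) (Rd₂ : M₂ → G₂ → Prop)
    (V₂ : P → Concept G₂ M₂ I₂)
    (S : G₁ → G₂ → Prop) (T : M₁ → M₂ → Prop) : Prop :=
  (∀ p : P, ∀ g₁ g₂, S g₁ g₂ → g₁ ∈ (V₁ p).extent → g₂ ∈ (V₂ p).extent) ∧
  (∀ p : P, ∀ m₁ m₂, T m₁ m₂ → m₂ ∈ (V₂ p).intent → m₁ ∈ (V₁ p).intent) ∧
  (∀ g₁ g₂ m₂, S g₁ g₂ → ¬ I₂ g₂ m₂ → ∃ m₁, ¬ I₁ g₁ m₁ ∧ T m₁ m₂) ∧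
  (∀ m₁ m₂ g₁, T m₁ m₂ → ¬ I₁ g₁ m₁ → ∃ g₂, ¬ I₂ g₂ m₂ ∧ S g₁ g₂) ∧
  (∀ g₁ g₂ m₂, S g₁ g₂ → ¬ Rb₂ g₂ m₂ → ∃ m₁, ¬ Rb₁ g₁ m₁ ∧ T m₁ m₂) ∧
  (∀ m₁ m₂ g₁, T m₁ m₂ → ¬ Rd₁ m₁ g₁ → ∃ g₂, ¬ Rd₂ m₂ g₂ ∧ S g₁ g₂)

section Aux

variable {G₁ M₁ G₂ M₂ : Type*} {I₁ : G₁ → M₁ → Prop} {I₂ : G₂ → M₂ → Prop}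

/-- A pair of concepts is "preserved" along a pair of relations `(S, T)`. -/
def Pres (S : G₁ → G₂ → Prop) (T : M₁ → M₂ → Prop)
    (c₁ : Concept G₁ M₁ I₁) (c₂ : Concept G₂ M₂ I₂) : Prop :=
  (∀ ⦃g₁ g₂⦄, S g₁ g₂ → g₁ ∈ c₁.extent → g₂ ∈ c₂.extent) ∧
  (∀ ⦃m₁ m₂⦄, T m₁ m₂ → m₂ ∈ c₂.intent → m₁ ∈ c₁.intent)

variable {S : G₁ → G₂ → Prop} {T : M₁ → M₂ → Prop}

theorem ext_to_int
    (h4 : ∀ m₁ m₂ g₁, T m₁ m₂ → ¬ I₁ g₁ m₁ → ∃ g₂, ¬ I₂ g₂ m₂ ∧ S g₁ g₂)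
    {c₁ : Concept G₁ M₁ I₁} {c₂ : Concept G₂ M₂ I₂}
    (hext : ∀ ⦃g₁ g₂⦄, S g₁ g₂ → g₁ ∈ c₁.extent → g₂ ∈ c₂.extent) :
    ∀ ⦃m₁ m₂⦄, T m₁ m₂ → m₂ ∈ c₂.intent → m₁ ∈ c₁.intent := by
  intro m₁ m₂ hT hm₂
  rw [← c₂.upperPolar_extent] at hm₂
  rw [← c₁.upperPolar_extent]
  intro g₁ hg₁
  by_contra hI
  obtain ⟨g₂, hI₂, hS⟩ := h4 m₁ m₂ g₁ hT hI
  exact hI₂ (hm₂ (hext hS hg₁))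

theorem int_to_ext
    (h3 : ∀ g₁ g₂ m₂, S g₁ g₂ → ¬ I₂ g₂ m₂ → ∃ m₁, ¬ I₁ g₁ m₁ ∧ T m₁ m₂)
    {c₁ : Concept G₁ M₁ I₁} {c₂ : Concept G₂ M₂ I₂}
    (hint : ∀ ⦃m₁ m₂⦄, T m₁ m₂ → m₂ ∈ c₂.intent → m₁ ∈ c₁.intent) :
    ∀ ⦃g₁ g₂⦄, S g₁ g₂ → g₁ ∈ c₁.extent → g₂ ∈ c₂.extent := by
  intro g₁ g₂ hS hg₁
  rw [← c₁.lowerPolar_intent] at hg₁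
  rw [← c₂.lowerPolar_intent]
  intro m₂ hm₂
  by_contra hI
  obtain ⟨m₁, hI₁, hT⟩ := h3 g₁ g₂ m₂ hS hI
  exact hI₁ (hg₁ (hint hT hm₂))

end Aux

/-- Main lemma: a simulation preserves the semantics of all formulas, provided the
assignments are preserved on the free variables. -/
theorem sem_pres [DecidableEq Var] {G₁ M₁ G₂ M₂ : Type*}
    {I₁ : G₁ → M₁ → Prop} {Rb₁ : G₁ → M₁ → Prop} {Rd₁ : M₁ → G₁ → Prop}
    {hb₁ : ∀ m : M₁,
      lowerPolar I₁ (upperPolar I₁ (lowerPolar Rb₁ {m})) = lowerPolar Rb₁ {m}}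
    {hd₁ : ∀ g : G₁,
      upperPolar I₁ (lowerPolar I₁ (lowerPolar Rd₁ {g})) = lowerPolar Rd₁ {g}}
    {V₁ : P → Concept G₁ M₁ I₁}
    {I₂ : G₂ → M₂ → Prop} {Rb₂ : G₂ → M₂ → Prop} {Rd₂ : M₂ → G₂ → Prop}
    {hb₂ : ∀ m : M₂,
      lowerPolar I₂ (upperPolar I₂ (lowerPolar Rb₂ {m})) = lowerPolar Rb₂ {m}}
    {hd₂ : ∀ g : G₂,
      upperPolar I₂ (lowerPolar I₂ (lowerPolar Rd₂ {g})) = lowerPolar Rd₂ {g}}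
    {V₂ : P → Concept G₂ M₂ I₂}
    {S : G₁ → G₂ → Prop} {T : M₁ → M₂ → Prop}
    (hsim : IsSimulation I₁ Rb₁ Rd₁ V₁ I₂ Rb₂ Rd₂ V₂ S T) :
    ∀ (φ : MuForm P Var) (A₁ : Var → Concept G₁ M₁ I₁) (A₂ : Var → Concept G₂ M₂ I₂),
      (∀ v ∈ φ.freeVars, Pres S T (A₁ v) (A₂ v)) →
      Pres S T (MuForm.sem I₁ Rb₁ Rd₁ hb₁ hd₁ V₁ φ A₁)
        (MuForm.sem I₂ Rb₂ Rd₂ hb₂ hd₂ V₂ φ A₂) := by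
  obtain ⟨h1, h2, h3, h4, h5, h6⟩ := hsim
  intro φ
  induction φ with
  | atom p =>
    intro A₁ A₂ _
    exact ⟨fun g₁ g₂ hS hg => h1 p g₁ g₂ hS hg, fun m₁ m₂ hT hm => h2 p m₁ m₂ hT hm⟩
  | var v =>
    intro A₁ A₂ hA
    exact hA v rfl
  | bot =>
    intro A₁ A₂ _
    refine ⟨?_, fun m₁ m₂ _ _ => Set.mem_univ m₁⟩
    intro g₁ g₂ hS hg₁ m₂ _
    by_contra hI
    obtain ⟨m₁, hI₁, _⟩ := h3 g₁ g₂ m₂ hS hI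
    exact hI₁ (hg₁ (Set.mem_univ m₁))
  | top =>
    intro A₁ A₂ _
    refine ⟨fun g₁ g₂ _ _ => Set.mem_univ g₂, ?_⟩
    intro m₁ m₂ hT hm₂ g₁ _
    by_contra hI
    obtain ⟨g₂, hI₂, _⟩ := h4 m₁ m₂ g₁ hT hI
    exact hI₂ (hm₂ (Set.mem_univ g₂))
  | or φ ψ ihφ ihψ =>
    intro A₁ A₂ hA
    have hφ := ihφ A₁ A₂ fun v hv => hA v (Set.mem_union_left _ hv)
    have hψ := ihψ A₁ A₂ fun v hv => hA v (Set.mem_union_right _ hv)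
    have hint : ∀ ⦃m₁ m₂⦄, T m₁ m₂ →
        m₂ ∈ (MuForm.sem I₂ Rb₂ Rd₂ hb₂ hd₂ V₂ (MuForm.or φ ψ) A₂).intent →
        m₁ ∈ (MuForm.sem I₁ Rb₁ Rd₁ hb₁ hd₁ V₁ (MuForm.or φ ψ) A₁).intent := by
      intro m₁ m₂ hT hm₂
      exact ⟨hφ.2 hT hm₂.1, hψ.2 hT hm₂.2⟩
    exact ⟨int_to_ext h3 hint, hint⟩
  | and φ ψ ihφ ihψ =>
    intro A₁ A₂ hA
    have hφ := ihφ A₁ A₂ fun v hv => hA v (Set.mem_union_left _ hv)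
    have hψ := ihψ A₁ A₂ fun v hv => hA v (Set.mem_union_right _ hv)
    have hext : ∀ ⦃g₁ g₂⦄, S g₁ g₂ →
        g₁ ∈ (MuForm.sem I₁ Rb₁ Rd₁ hb₁ hd₁ V₁ (MuForm.and φ ψ) A₁).extent →
        g₂ ∈ (MuForm.sem I₂ Rb₂ Rd₂ hb₂ hd₂ V₂ (MuForm.and φ ψ) A₂).extent := by
      intro g₁ g₂ hS hg₁
      exact ⟨hφ.1 hS hg₁.1, hψ.1 hS hg₁.2⟩
    exact ⟨hext, ext_to_int h4 hext⟩
  | box φ ihφ =>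
    intro A₁ A₂ hA
    have hφ := ihφ A₁ A₂ hA
    have hext : ∀ ⦃g₁ g₂⦄, S g₁ g₂ →
        g₁ ∈ (MuForm.sem I₁ Rb₁ Rd₁ hb₁ hd₁ V₁ (MuForm.box φ) A₁).extent →
        g₂ ∈ (MuForm.sem I₂ Rb₂ Rd₂ hb₂ hd₂ V₂ (MuForm.box φ) A₂).extent := by
      intro g₁ g₂ hS hg₁
      intro m₂ hm₂
      by_contra hR
      obtain ⟨m₁, hR₁, hT⟩ := h5 g₁ g₂ m₂ hS hR
      exact hR₁ (hg₁ (hφ.2 hT hm₂))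
    exact ⟨hext, ext_to_int h4 hext⟩
  | dia φ ihφ =>
    intro A₁ A₂ hA
    have hφ := ihφ A₁ A₂ hA
    have hint : ∀ ⦃m₁ m₂⦄, T m₁ m₂ →
        m₂ ∈ (MuForm.sem I₂ Rb₂ Rd₂ hb₂ hd₂ V₂ (MuForm.dia φ) A₂).intent →
        m₁ ∈ (MuForm.sem I₁ Rb₁ Rd₁ hb₁ hd₁ V₁ (MuForm.dia φ) A₁).intent := by
      intro m₁ m₂ hT hm₂
      intro g₁ hg₁
      by_contra hR
      obtain ⟨g₂, hR₂, hS⟩ := h6 m₁ m₂ g₁ hT hR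
      exact hR₂ (hm₂ (hφ.1 hS hg₁))
    exact ⟨int_to_ext h3 hint, hint⟩
  | mu v φ ihφ =>
    intro A₁ A₂ hA
    have hext : ∀ ⦃g₁ g₂⦄, S g₁ g₂ →
        g₁ ∈ (MuForm.sem I₁ Rb₁ Rd₁ hb₁ hd₁ V₁ (MuForm.mu v φ) A₁).extent →
        g₂ ∈ (MuForm.sem I₂ Rb₂ Rd₂ hb₂ hd₂ V₂ (MuForm.mu v φ) A₂).extent := by
      intro g₁ g₂ hS hg₁
      simp only [MuForm.sem, Concept.extent_sInf, Set.mem_iInter] at hg₁ ⊢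
      intro c₂ hc₂
      set Y : Set M₁ := {m₁ | ∃ m₂ ∈ c₂.intent, T m₁ m₂} with hYdef
      let c₁ : Concept G₁ M₁ I₁ :=
        ⟨lowerPolar I₁ Y, upperPolar I₁ (lowerPolar I₁ Y), rfl,
          lowerPolar_upperPolar_lowerPolar _ _⟩
      have hpres : Pres S T c₁ c₂ := by
        constructor
        · intro g₁' g₂' hS' hg'
          rw [← c₂.lowerPolar_intent]
          intro m₂ hm₂
          by_contra hI
          obtain ⟨m₁, hI₁, hT⟩ := h3 g₁' g₂' m₂ hS' hI
          exact hI₁ (hg' ⟨m₂, hm₂, hT⟩)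
        · intro m₁ m₂ hT hm₂
          exact subset_upperPolar_lowerPolar I₁ Y ⟨m₂, hm₂, hT⟩
      have hIH := ihφ (Function.update A₁ v c₁) (Function.update A₂ v c₂) ?_
      · have hc₁ : MuForm.sem I₁ Rb₁ Rd₁ hb₁ hd₁ V₁ φ (Function.update A₁ v c₁) ≤ c₁ := by
          rw [← Concept.extent_subset_extent_iff]
          intro g hg
          rintro m₁ ⟨m₂, hm₂, hT⟩
          have hm₂' : m₂ ∈ (MuForm.sem I₂ Rb₂ Rd₂ hb₂ hd₂ V₂ φ (Function.update A₂ v c₂)).intent :=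
            Concept.intent_subset_intent_iff.2 hc₂ hm₂
          have hm₁' := hIH.2 hT hm₂'
          rw [← (MuForm.sem I₁ Rb₁ Rd₁ hb₁ hd₁ V₁ φ (Function.update A₁ v c₁)).upperPolar_extent]
            at hm₁'
          exact hm₁' hg
        exact hpres.1 hS (hg₁ c₁ hc₁)
      · intro w hw
        by_cases hwv : w = v
        · subst hwv
          simpa using hpres
        · rw [Function.update_of_ne hwv, Function.update_of_ne hwv]
          exact hA w ⟨hw, hwv⟩
    exact ⟨hext, ext_to_int h4 hext⟩
  | nu v φ ihφ =>
    intro A₁ A₂ hA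
    have hint : ∀ ⦃m₁ m₂⦄, T m₁ m₂ →
        m₂ ∈ (MuForm.sem I₂ Rb₂ Rd₂ hb₂ hd₂ V₂ (MuForm.nu v φ) A₂).intent →
        m₁ ∈ (MuForm.sem I₁ Rb₁ Rd₁ hb₁ hd₁ V₁ (MuForm.nu v φ) A₁).intent := by
      intro m₁ m₂ hT hm₂
      simp only [MuForm.sem, Concept.intent_sSup, Set.mem_iInter] at hm₂ ⊢
      intro c₁ hc₁
      set B : Set G₂ := {g₂ | ∃ g₁ ∈ c₁.extent, S g₁ g₂} with hBdef
      let c₂ : Concept G₂ M₂ I₂ :=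
        ⟨lowerPolar I₂ (upperPolar I₂ B), upperPolar I₂ B,
          upperPolar_lowerPolar_upperPolar _ _, rfl⟩
      have hextc : ∀ ⦃g₁ g₂⦄, S g₁ g₂ → g₁ ∈ c₁.extent → g₂ ∈ c₂.extent := by
        intro g₁' g₂' hS' hg'
        exact subset_lowerPolar_upperPolar I₂ B ⟨g₁', hg', hS'⟩
      have hpres : Pres S T c₁ c₂ := ⟨hextc, ext_to_int h4 hextc⟩
      have hIH := ihφ (Function.update A₁ v c₁) (Function.update A₂ v c₂) ?_
      · have hc₂ : c₂ ≤ MuForm.sem I₂ Rb₂ Rd₂ hb₂ hd₂ V₂ φ (Function.update A₂ v c₂) := by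
          rw [← Concept.extent_subset_extent_iff]
          have hB : B ⊆ (MuForm.sem I₂ Rb₂ Rd₂ hb₂ hd₂ V₂ φ (Function.update A₂ v c₂)).extent := by
            rintro g₂' ⟨g₁', hg₁', hS'⟩
            exact hIH.1 hS' (Concept.extent_subset_extent_iff.2 hc₁ hg₁')
          calc c₂.extent = lowerPolar I₂ (upperPolar I₂ B) := rfl
            _ ⊆ lowerPolar I₂ (upperPolar I₂
                  (MuForm.sem I₂ Rb₂ Rd₂ hb₂ hd₂ V₂ φ (Function.update A₂ v c₂)).extent) :=
                lowerPolar_anti _ (upperPolar_anti _ hB)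
            _ = _ := by
                rw [(MuForm.sem I₂ Rb₂ Rd₂ hb₂ hd₂ V₂ φ (Function.update A₂ v c₂)).upperPolar_extent,
                  (MuForm.sem I₂ Rb₂ Rd₂ hb₂ hd₂ V₂ φ (Function.update A₂ v c₂)).lowerPolar_intent]
        exact hpres.2 hT (hm₂ c₂ hc₂)
      · intro w hw
        by_cases hwv : w = v
        · subst hwv
          simpa using hpres
        · rw [Function.update_of_ne hwv, Function.update_of_ne hwv]
          exact hA w ⟨hw, hwv⟩
    exact ⟨int_to_ext h3 hint, hint⟩


/-- If `g₁` and `g₂` (resp. `m₁` and `m₂`) are bisimilar elements of two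
polarity-based models `𝕄₁` and `𝕄₂` (i.e. there are simulations `(S₁,T₁) : 𝕄₁ → 𝕄₂` and
`(S₂,T₂) : 𝕄₂ → 𝕄₁` with `g₁ S₁ g₂` and `g₂ S₂ g₁`, resp. `m₁ T₁ m₂` and `m₂ T₂ m₁`),
then for every μ-calculus formula `φ` with no free variables, `𝕄₁, g₁ ⊩ φ` iff
`𝕄₂, g₂ ⊩ φ` (resp. `𝕄₁, m₁ ≻ φ` iff `𝕄₂, m₂ ≻ φ`). -/
theorem bisimulation_invariance [DecidableEq Var] {G₁ M₁ G₂ M₂ : Type*}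
    (I₁ : G₁ → M₁ → Prop) (Rb₁ : G₁ → M₁ → Prop) (Rd₁ : M₁ → G₁ → Prop)
    (hb₁0 : ∀ m : M₁,
      lowerPolar I₁ (upperPolar I₁ (lowerPolar Rb₁ {m})) = lowerPolar Rb₁ {m})
    (hb₁1 : ∀ g : G₁,
      upperPolar I₁ (lowerPolar I₁ (upperPolar Rb₁ {g})) = upperPolar Rb₁ {g})
    (hd₁0 : ∀ g : G₁,
      upperPolar I₁ (lowerPolar I₁ (lowerPolar Rd₁ {g})) = lowerPolar Rd₁ {g})
    (hd₁1 : ∀ m : M₁,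
      lowerPolar I₁ (upperPolar I₁ (upperPolar Rd₁ {m})) = upperPolar Rd₁ {m})
    (V₁ : P → Concept G₁ M₁ I₁)
    (I₂ : G₂ → M₂ → Prop) (Rb₂ : G₂ → M₂ → Prop) (Rd₂ : M₂ → G₂ → Prop)
    (hb₂0 : ∀ m : M₂,
      lowerPolar I₂ (upperPolar I₂ (lowerPolar Rb₂ {m})) = lowerPolar Rb₂ {m})
    (hb₂1 : ∀ g : G₂,
      upperPolar I₂ (lowerPolar I₂ (upperPolar Rb₂ {g})) = upperPolar Rb₂ {g})
    (hd₂0 : ∀ g : G₂,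
      upperPolar I₂ (lowerPolar I₂ (lowerPolar Rd₂ {g})) = lowerPolar Rd₂ {g})
    (hd₂1 : ∀ m : M₂,
      lowerPolar I₂ (upperPolar I₂ (upperPolar Rd₂ {m})) = upperPolar Rd₂ {m})
    (V₂ : P → Concept G₂ M₂ I₂) :
    (∀ g₁ g₂,
      (∃ (S₁ : G₁ → G₂ → Prop) (T₁ : M₁ → M₂ → Prop),
        IsSimulation I₁ Rb₁ Rd₁ V₁ I₂ Rb₂ Rd₂ V₂ S₁ T₁ ∧ S₁ g₁ g₂) →
      (∃ (S₂ : G₂ → G₁ → Prop) (T₂ : M₂ → M₁ → Prop),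
        IsSimulation I₂ Rb₂ Rd₂ V₂ I₁ Rb₁ Rd₁ V₁ S₂ T₂ ∧ S₂ g₂ g₁) →
      ∀ φ : MuForm P Var, φ.freeVars = ∅ →
      ∀ (A₁ : Var → Concept G₁ M₁ I₁) (A₂ : Var → Concept G₂ M₂ I₂),
        (g₁ ∈ (MuForm.sem I₁ Rb₁ Rd₁ hb₁0 hd₁0 V₁ φ A₁).extent ↔
         g₂ ∈ (MuForm.sem I₂ Rb₂ Rd₂ hb₂0 hd₂0 V₂ φ A₂).extent)) ∧
    (∀ m₁ m₂,
      (∃ (S₁ : G₁ → G₂ → Prop) (T₁ : M₁ → M₂ → Prop),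
        IsSimulation I₁ Rb₁ Rd₁ V₁ I₂ Rb₂ Rd₂ V₂ S₁ T₁ ∧ T₁ m₁ m₂) →
      (∃ (S₂ : G₂ → G₁ → Prop) (T₂ : M₂ → M₁ → Prop),
        IsSimulation I₂ Rb₂ Rd₂ V₂ I₁ Rb₁ Rd₁ V₁ S₂ T₂ ∧ T₂ m₂ m₁) →
      ∀ φ : MuForm P Var, φ.freeVars = ∅ →
      ∀ (A₁ : Var → Concept G₁ M₁ I₁) (A₂ : Var → Concept G₂ M₂ I₂),
        (m₁ ∈ (MuForm.sem I₁ Rb₁ Rd₁ hb₁0 hd₁0 V₁ φ A₁).intent ↔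
         m₂ ∈ (MuForm.sem I₂ Rb₂ Rd₂ hb₂0 hd₂0 V₂ φ A₂).intent)) := by
  constructor
  · rintro g₁ g₂ ⟨S₁, T₁, hsim₁, hg₁⟩ ⟨S₂, T₂, hsim₂, hg₂⟩ φ hφ A₁ A₂
    have vac₁ : ∀ v ∈ φ.freeVars, Pres S₁ T₁ (A₁ v) (A₂ v) := by
      rw [hφ]; intro v hv; exact absurd hv (Set.notMem_empty v)
    have vac₂ : ∀ v ∈ φ.freeVars, Pres S₂ T₂ (A₂ v) (A₁ v) := by
      rw [hφ]; intro v hv; exact absurd hv (Set.notMem_empty v)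
    exact ⟨fun h => (sem_pres hsim₁ φ A₁ A₂ vac₁).1 hg₁ h,
      fun h => (sem_pres hsim₂ φ A₂ A₁ vac₂).1 hg₂ h⟩
  · rintro m₁ m₂ ⟨S₁, T₁, hsim₁, hm₁⟩ ⟨S₂, T₂, hsim₂, hm₂⟩ φ hφ A₁ A₂
    have vac₁ : ∀ v ∈ φ.freeVars, Pres S₁ T₁ (A₁ v) (A₂ v) := by
      rw [hφ]; intro v hv; exact absurd hv (Set.notMem_empty v)
    have vac₂ : ∀ v ∈ φ.freeVars, Pres S₂ T₂ (A₂ v) (A₁ v) := by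
      rw [hφ]; intro v hv; exact absurd hv (Set.notMem_empty v)
    exact ⟨fun h => (sem_pres hsim₂ φ A₂ A₁ vac₂).2 hm₂ h,
      fun h => (sem_pres hsim₁ φ A₁ A₂ vac₁).2 hm₁ h⟩
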